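/- Let f = x₁²x₂ ∈ k[x₁,x₂] and let g = [[a,b],[c,d]] ∈ GL₂(k[[t]]) (entries in k[[t]], determinant nonzero). Set s = val_t(g·f), where g·f is the polynomial obtained by substituting x₁ ↦ ax₁ + cx₂, x₂ ↦ bx₁ + dx₂ (equivalently g·f = a²c·x₁³ + a(ad+2bc)·x₁²x₂ + b(bc+2ad)·x₁x₂² + b²d·x₂³). Then val_t(det g) ≥ s/2; consequently μ(g, x₁²x₂) = 3·val_t(det g)/s ≥ 3/2. -/

import Mathlib

/-- The Gauss `t`-adic valuation of a polynomial with coefficients in `k[[t]]`: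
the minimum of the `t`-adic valuations of its coefficients. -/
noncomputable def tval {k : Type*} [Field k] {n : ℕ}
    (F : MvPolynomial (Fin n) (PowerSeries k)) : ℕ :=
  sInf {m : ℕ | ∃ d, PowerSeries.coeff (R := k) m (MvPolynomial.coeff d F) ≠ 0}

/-- The `t`-adic valuation of a power series. -/
noncomputable def psval {k : Type*} [Field k] (p : PowerSeries k) : ℕ :=
  sInf {m : ℕ | PowerSeries.coeff (R := k) m p ≠ 0}

/-- The action of a matrix `g` over `k[[t]]` on polynomials by linear substitution
of the variables. -/
noncomputable def matAct {k : Type*} [Field k] {n : ℕ}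
    (g : Matrix (Fin n) (Fin n) (PowerSeries k))
    (F : MvPolynomial (Fin n) (PowerSeries k)) : MvPolynomial (Fin n) (PowerSeries k) :=
  MvPolynomial.aeval (fun i => ∑ j, MvPolynomial.C (g i j) * MvPolynomial.X j) F

/-- The `G`-rank (`G = GLₙ`) of a (degree `d`) polynomial `F` over `k[[t]]`:
the infimum of `d · val_t(det g) / val_t(g·F)` over matrices `g` over `k[[t]]` with
nonzero determinant such that `val_t(g·F) > 0`. -/
noncomputable def GRank {k : Type*} [Field k] {n : ℕ} (d : ℕ)
    (F : MvPolynomial (Fin n) (PowerSeries k)) : ℝ :=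
  sInf {x : ℝ | ∃ g : Matrix (Fin n) (Fin n) (PowerSeries k),
    g.det ≠ 0 ∧ 0 < tval (matAct g F) ∧
    x = (d : ℝ) * (psval g.det : ℝ) / (tval (matAct g F) : ℝ)}

section Aux

variable {k : Type*} [Field k]

lemma psval_le' {p : PowerSeries k} {i : ℕ} (h : PowerSeries.coeff (R := k) i p ≠ 0) : psval p ≤ i :=
  Nat.sInf_le h

lemma coeff_psval_ne {p : PowerSeries k} (hp : p ≠ 0) :
    PowerSeries.coeff (R := k) (psval p) p ≠ 0 := by
  have hne : {m : ℕ | PowerSeries.coeff (R := k) m p ≠ 0}.Nonempty := by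
    by_contra h
    simp only [Set.not_nonempty_iff_eq_empty, Set.eq_empty_iff_forall_notMem,
      Set.mem_setOf_eq, not_not] at h
    exact hp (PowerSeries.ext fun n => by rw [h n, map_zero])
  exact Nat.sInf_mem hne

lemma coeff_of_lt_psval {p : PowerSeries k} {i : ℕ} (h : i < psval p) :
    PowerSeries.coeff (R := k) i p = 0 := by
  by_contra hne
  exact absurd (psval_le' hne) (by omega)

lemma mul_coeff_zero {p q : PowerSeries k} {sp sq : ℕ}
    (hp : ∀ i < sp, PowerSeries.coeff (R := k) i p = 0)
    (hq : ∀ i < sq, PowerSeries.coeff (R := k) i q = 0) :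
    ∀ m < sp + sq, PowerSeries.coeff (R := k) m (p * q) = 0 := by
  intro m hm
  rw [PowerSeries.coeff_mul]
  apply Finset.sum_eq_zero
  intro b hb
  rw [Finset.HasAntidiagonal.mem_antidiagonal] at hb
  rcases lt_or_ge b.1 sp with h | h
  · rw [hp _ h, zero_mul]
  · rw [hq b.2 (by omega), mul_zero]

lemma psval_mul {p q : PowerSeries k} (hp : p ≠ 0) (hq : q ≠ 0) :
    psval (p * q) = psval p + psval q := by
  apply le_antisymm
  · apply psval_le'
    have hc : PowerSeries.coeff (R := k) (psval p + psval q) (p * q) =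
        PowerSeries.coeff (R := k) (psval p) p * PowerSeries.coeff (R := k) (psval q) q := by
      rw [PowerSeries.coeff_mul]
      apply Finset.sum_eq_single_of_mem (psval p, psval q) (Finset.HasAntidiagonal.mem_antidiagonal.2 rfl)
      intro b hb hne
      rw [Finset.HasAntidiagonal.mem_antidiagonal] at hb
      rcases lt_or_ge b.1 (psval p) with h | h
      · rw [coeff_of_lt_psval h, zero_mul]
      · have h2 : b.2 < psval q := by
          rcases eq_or_lt_of_le h with h' | h'
          · exact absurd (Prod.ext h'.symm (by omega)) hne
          · omega
        rw [coeff_of_lt_psval h2, mul_zero]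
    rw [hc]
    exact mul_ne_zero (coeff_psval_ne hp) (coeff_psval_ne hq)
  · by_contra h
    push_neg at h
    exact coeff_psval_ne (mul_ne_zero hp hq)
      (mul_coeff_zero (fun i hi => coeff_of_lt_psval hi)
        (fun i hi => coeff_of_lt_psval hi) _ h)

lemma aux_key {s : ℕ} {det x c1 c2 c3 : PowerSeries k} (hdet : det ≠ 0) (hx : x ≠ 0)
    (h1 : ∀ i < s, PowerSeries.coeff (R := k) i c1 = 0)
    (h2 : ∀ i < s, PowerSeries.coeff (R := k) i c2 = 0)
    (h3 : ∀ i < s, PowerSeries.coeff (R := k) i c3 = 0)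
    (hid : c2 * c2 - (c1 * c3 + c1 * c3 + c1 * c3) = (det * x) * (det * x)) :
    s ≤ psval det + psval x := by
  by_contra h
  push_neg at h
  have hdx : det * x ≠ 0 := mul_ne_zero hdet hx
  have hv : psval ((det * x) * (det * x)) = (psval det + psval x) + (psval det + psval x) := by
    rw [psval_mul hdx hdx, psval_mul hdet hx]
  have hne := coeff_psval_ne (mul_ne_zero hdx hdx)
  rw [hv, ← hid] at hne
  apply hne
  rw [map_sub, map_add, map_add]
  rw [mul_coeff_zero h2 h2 _ (by omega), mul_coeff_zero h1 h3 _ (by omega)]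
  ring

end Aux

/-- for `f = x₁²x₂` and any `g ∈ GL₂(k[[t]])` (entries in `k[[t]]`, nonzero
determinant), with `s = val_t(g·f)`, one has `val_t(det g) ≥ s/2`; consequently
`μ(g, x₁²x₂) = 3·val_t(det g)/s ≥ 3/2` (when `s > 0`). Here `char k ≠ 2, 3`. -/
theorem stmt12 {k : Type*} [Field k] (h2 : (2 : k) ≠ 0) (h3 : (3 : k) ≠ 0)
    (g : Matrix (Fin 2) (Fin 2) (PowerSeries k)) (hg : g.det ≠ 0) :
    tval (matAct g (MvPolynomial.map (PowerSeries.C (R := k))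
        (MvPolynomial.X 0 ^ 2 * MvPolynomial.X 1 : MvPolynomial (Fin 2) k)))
      ≤ 2 * psval g.det ∧
    (0 < tval (matAct g (MvPolynomial.map (PowerSeries.C (R := k))
        (MvPolynomial.X 0 ^ 2 * MvPolynomial.X 1 : MvPolynomial (Fin 2) k))) →
      (3 : ℝ) / 2 ≤ (3 : ℝ) * (psval g.det : ℝ) /
        (tval (matAct g (MvPolynomial.map (PowerSeries.C (R := k))
          (MvPolynomial.X 0 ^ 2 * MvPolynomial.X 1 : MvPolynomial (Fin 2) k))) : ℝ)) := by
  set F := matAct g (MvPolynomial.map (PowerSeries.C (R := k))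
      (MvPolynomial.X 0 ^ 2 * MvPolynomial.X 1 : MvPolynomial (Fin 2) k)) with hFdef
  set s := tval F with hsdef
  set D := psval g.det with hDdef
  -- explicit form of g · f
  have hF : F =
      MvPolynomial.C (g 0 0 ^ 2 * g 1 0) * MvPolynomial.X 0 ^ 3
      + MvPolynomial.C (g 0 0 ^ 2 * g 1 1 + 2 * (g 0 0 * g 0 1 * g 1 0)) *
          (MvPolynomial.X 0 ^ 2 * MvPolynomial.X 1)
      + MvPolynomial.C (g 0 1 ^ 2 * g 1 0 + 2 * (g 0 0 * g 0 1 * g 1 1)) *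
          (MvPolynomial.X 0 * MvPolynomial.X 1 ^ 2)
      + MvPolynomial.C (g 0 1 ^ 2 * g 1 1) * MvPolynomial.X 1 ^ 3 := by
    have hCeq : PowerSeries.C (R := k) = algebraMap k (PowerSeries k) := rfl
    rw [hFdef, matAct, hCeq, MvPolynomial.aeval_map_algebraMap]
    simp [Fin.sum_univ_two, map_mul, map_add, map_pow, map_ofNat]
    ring
  -- the four coefficients
  have hc1 : MvPolynomial.coeff (Finsupp.single 0 3) F = g 0 0 ^ 2 * g 1 0 := by
    rw [hF]
    simp only [MvPolynomial.X, MvPolynomial.monomial_pow, MvPolynomial.monomial_mul,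
      MvPolynomial.coeff_add, MvPolynomial.coeff_C_mul, one_mul, mul_one, one_pow,
      Finsupp.smul_single, smul_eq_mul, MvPolynomial.coeff_monomial]
    norm_num [Finsupp.ext_iff, Fin.forall_fin_two, Finsupp.single_apply, Finsupp.add_apply]
  have hc2 : MvPolynomial.coeff (Finsupp.single 0 2 + Finsupp.single 1 1) F =
      g 0 0 ^ 2 * g 1 1 + 2 * (g 0 0 * g 0 1 * g 1 0) := by
    rw [hF]
    simp only [MvPolynomial.X, MvPolynomial.monomial_pow, MvPolynomial.monomial_mul,
      MvPolynomial.coeff_add, MvPolynomial.coeff_C_mul, one_mul, mul_one, one_pow,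
      Finsupp.smul_single, smul_eq_mul, MvPolynomial.coeff_monomial]
    norm_num [Finsupp.ext_iff, Fin.forall_fin_two, Finsupp.single_apply, Finsupp.add_apply]
  have hc3 : MvPolynomial.coeff (Finsupp.single 0 1 + Finsupp.single 1 2) F =
      g 0 1 ^ 2 * g 1 0 + 2 * (g 0 0 * g 0 1 * g 1 1) := by
    rw [hF]
    simp only [MvPolynomial.X, MvPolynomial.monomial_pow, MvPolynomial.monomial_mul,
      MvPolynomial.coeff_add, MvPolynomial.coeff_C_mul, one_mul, mul_one, one_pow,
      Finsupp.smul_single, smul_eq_mul, MvPolynomial.coeff_monomial]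
    norm_num [Finsupp.ext_iff, Fin.forall_fin_two, Finsupp.single_apply, Finsupp.add_apply]
  have hc4 : MvPolynomial.coeff (Finsupp.single 1 3) F = g 0 1 ^ 2 * g 1 1 := by
    rw [hF]
    simp only [MvPolynomial.X, MvPolynomial.monomial_pow, MvPolynomial.monomial_mul,
      MvPolynomial.coeff_add, MvPolynomial.coeff_C_mul, one_mul, mul_one, one_pow,
      Finsupp.smul_single, smul_eq_mul, MvPolynomial.coeff_monomial]
    norm_num [Finsupp.ext_iff, Fin.forall_fin_two, Finsupp.single_apply, Finsupp.add_apply]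
  -- coefficients of F vanish below s
  have h_lt_s : ∀ i < s, ∀ dd : Fin 2 →₀ ℕ,
      PowerSeries.coeff (R := k) i (MvPolynomial.coeff dd F) = 0 := by
    intro i hi dd
    by_contra hne
    have hle : s ≤ i := Nat.sInf_le ⟨dd, hne⟩
    omega
  -- some entry of the first row has valuation ≤ D
  have hdet2 : g.det = g 0 0 * g 1 1 - g 0 1 * g 1 0 := Matrix.det_fin_two g
  have h_row : ∃ i ≤ D, PowerSeries.coeff (R := k) i (g 0 0) ≠ 0 ∨ PowerSeries.coeff (R := k) i (g 0 1) ≠ 0 := by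
    by_contra h
    push_neg at h
    have hD : PowerSeries.coeff (R := k) D g.det ≠ 0 := coeff_psval_ne hg
    have e1 : PowerSeries.coeff (R := k) D (g 0 0 * g 1 1) = 0 := by
      rw [PowerSeries.coeff_mul]
      apply Finset.sum_eq_zero
      intro b hb
      rw [Finset.HasAntidiagonal.mem_antidiagonal] at hb
      rw [(h b.1 (by omega)).1, zero_mul]
    have e2 : PowerSeries.coeff (R := k) D (g 0 1 * g 1 0) = 0 := by
      rw [PowerSeries.coeff_mul]
      apply Finset.sum_eq_zero
      intro b hb
      rw [Finset.HasAntidiagonal.mem_antidiagonal] at hb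
      rw [(h b.1 (by omega)).2, zero_mul]
    apply hD
    rw [hdet2, map_sub, e1, e2, sub_zero]
  -- the key inequality s ≤ 2 D
  have hmain : s ≤ 2 * D := by
    obtain ⟨i, hiD, hab⟩ := h_row
    rcases hab with ha | hb
    · have ha0 : g 0 0 ≠ 0 := fun h => ha (by rw [h, map_zero])
      have hva : psval (g 0 0) ≤ D := le_trans (psval_le' ha) hiD
      have hkey := aux_key (s := s) (det := g.det) (x := g 0 0)
        (c1 := MvPolynomial.coeff (Finsupp.single 0 3) F)
        (c2 := MvPolynomial.coeff (Finsupp.single 0 2 + Finsupp.single 1 1) F)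
        (c3 := MvPolynomial.coeff (Finsupp.single 0 1 + Finsupp.single 1 2) F)
        hg ha0 (fun i hi => h_lt_s i hi _) (fun i hi => h_lt_s i hi _)
        (fun i hi => h_lt_s i hi _)
        (by rw [hc1, hc2, hc3, hdet2]; ring)
      omega
    · have hb0 : g 0 1 ≠ 0 := fun h => hb (by rw [h, map_zero])
      have hvb : psval (g 0 1) ≤ D := le_trans (psval_le' hb) hiD
      have hkey := aux_key (s := s) (det := g.det) (x := g 0 1)
        (c1 := MvPolynomial.coeff (Finsupp.single 0 2 + Finsupp.single 1 1) F)
        (c2 := MvPolynomial.coeff (Finsupp.single 0 1 + Finsupp.single 1 2) F)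
        (c3 := MvPolynomial.coeff (Finsupp.single 1 3) F)
        hg hb0 (fun i hi => h_lt_s i hi _) (fun i hi => h_lt_s i hi _)
        (fun i hi => h_lt_s i hi _)
        (by rw [hc2, hc3, hc4, hdet2]; ring)
      omega
  refine ⟨hmain, fun hs => ?_⟩
  have hsR : (0 : ℝ) < (s : ℝ) := by exact_mod_cast hs
  have hDR : (s : ℝ) ≤ 2 * (D : ℝ) := by exact_mod_cast hmain
  rw [div_le_div_iff₀ (by norm_num) hsR]
  linarith
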